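/- Let P be a finite bounded poset with a TCL-labeling λ taking values in the integers, let Γ: m₁,…,m_t be a total order on the maximal chains of P that agrees with the lexicographic order on maximal chains induced by λ, and let λ' be the CE-labeling of P determined by Γ. Suppose x ⋖ u ⋖ b and x ⋖ y ⋖ d with u ≠ y, and let r be a root of x. If λ(r,x,u) < λ(r,x,y), then λ'(r,x,u) < λ'(r,x,y). Also, if λ(r,x,u) = λ(r,x,y) and λ(r∪{u},u,b) < λ(r∪{y},y,d), then λ'(r∪{u},u,b) < λ'(r∪{y},y,d). -/

import Mathlib

open scoped Classical

variable {P : Type*} [PartialOrder P] [BoundedOrder P]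

/-- `CoverList l` : consecutive entries of `l` are cover relations. -/
def CoverList : List P → Prop
  | x :: y :: t => x ⋖ y ∧ CoverList (y :: t)
  | _ => True

/-- `SatFromTo l x y` : `l` is a saturated chain (i.e. a maximal chain of the interval
`[x,y]`) starting at `x` and ending at `y`. -/
def SatFromTo (l : List P) (x y : P) : Prop :=
  l ≠ [] ∧ l.head? = some x ∧ l.getLast? = some y ∧ CoverList l

/-- `m` is a maximal chain of the bounded poset `P`. -/
def MaxChainOfP (m : List P) : Prop := SatFromTo m ⊥ ⊤

/-- `r` is a root of `x`, i.e. a maximal chain of `[⊥, x]` (it contains `x`). -/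
def RootOf (r : List P) (x : P) : Prop := SatFromTo r ⊥ x

/-- The label sequence of a chain (the second argument, which starts at the last
element of the root `r`) with respect to a chain-edge labeling `lab`. -/
def labelSeq {Λ : Type*} (lab : List P → P → P → Λ) : List P → List P → List Λ
  | r, x :: y :: t => lab r x y :: labelSeq lab (r ++ [y]) (y :: t)
  | _, _ => []

/-- The pair of rooted cover relations `[u,v]_r`, `[v,w]_{r∪{v}}` is a topological
ascent: its label sequence lexicographically strictly precedes the label sequence of
every other maximal chain of `[u,w]_r`. -/
def TopAscent (lab : List P → P → P → ℤ) (r : List P) (u v w : P) : Prop :=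
  ∀ c : List P, SatFromTo c u w → c ≠ [u, v, w] →
    List.Lex (· < ·) (labelSeq lab r [u, v, w]) (labelSeq lab r c)

/-- The chain (second argument) with root `r` is topologically ascending. -/
def TopAscending (lab : List P → P → P → ℤ) : List P → List P → Prop
  | r, u :: v :: w :: t => TopAscent lab r u v w ∧ TopAscending lab (r ++ [v]) (v :: w :: t)
  | _, _ => True

/-- TCL-labeling : every rooted interval has a unique topologically ascending
maximal chain. -/
def IsTCLLabeling (lab : List P → P → P → ℤ) : Prop :=
  ∀ x y : P, x ≤ y → ∀ r : List P, RootOf r x →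
    ∃! c : List P, SatFromTo c x y ∧ TopAscending lab r c

/-- CC-labeling : a TCL-labeling such that in every rooted interval distinct maximal
chains get distinct label sequences, none of which is a prefix of another. -/
def IsCCLabeling (lab : List P → P → P → ℤ) : Prop :=
  IsTCLLabeling lab ∧
    ∀ x y : P, x ≤ y → ∀ r : List P, RootOf r x →
      ∀ c c' : List P, SatFromTo c x y → SatFromTo c' x y → c ≠ c' →
        ¬ labelSeq lab r c <+: labelSeq lab r c'

/-- CL-labeling with labels in an arbitrary poset `Λ`. -/
def IsCLLabeling {Λ : Type*} [PartialOrder Λ] (lab : List P → P → P → Λ) : Prop :=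
  ∀ x y : P, x ≤ y → ∀ r : List P, RootOf r x →
    ∃ c : List P, (SatFromTo c x y ∧ List.Chain' (· < ·) (labelSeq lab r c)) ∧
      (∀ c' : List P, SatFromTo c' x y → List.Chain' (· < ·) (labelSeq lab r c') → c' = c) ∧
      (∀ c' : List P, SatFromTo c' x y → c' ≠ c →
        List.Lex (· < ·) (labelSeq lab r c) (labelSeq lab r c'))

def TCLShellable (P : Type*) [PartialOrder P] [BoundedOrder P] : Prop :=
  ∃ lab : List P → P → P → ℤ, IsTCLLabeling lab

def CCShellable (P : Type*) [PartialOrder P] [BoundedOrder P] : Prop :=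
  ∃ lab : List P → P → P → ℤ, IsCCLabeling lab

def CLShellable (P : Type*) [PartialOrder P] [BoundedOrder P] : Prop :=
  ∃ (Λ : Type) (_ : PartialOrder Λ) (lab : List P → P → P → Λ), IsCLLabeling lab

/-- `P` is graded : all maximal chains of `P` have the same length. -/
def Graded (P : Type*) [PartialOrder P] [BoundedOrder P] : Prop :=
  ∀ c c' : List P, MaxChainOfP c → MaxChainOfP c' → c.length = c'.length

/-- `Γ` is a total order `m₁, …, m_t` on the maximal chains of `P`. -/
def Enumerates (Γ : List (List P)) : Prop :=
  Γ.Nodup ∧ ∀ m : List P, m ∈ Γ ↔ MaxChainOfP m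

/-- `Γ` is a total order on the maximal chains which agrees with (is consistent with)
the lexicographic order on maximal chains induced by `lab`. -/
def AgreesWithLex (lab : List P → P → P → ℤ) (Γ : List (List P)) : Prop :=
  Enumerates Γ ∧ ∀ i j : ℕ, i < j → j < Γ.length →
    ¬ List.Lex (· < ·) (labelSeq lab [(⊥ : P)] (Γ.getD j []))
        (labelSeq lab [(⊥ : P)] (Γ.getD i []))

/-- Position in `Γ` of the earliest maximal chain containing all elements of `l`. -/
noncomputable def fidx (Γ : List (List P)) (l : List P) : ℕ :=
  Γ.findIdx fun m => decide (∀ a ∈ l, a ∈ m)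

/-- `a'` witnesses that the earliest chain containing `r ∪ {a}` is "sandwiched" by
two chains containing `r ∪ {a'}`. -/
def Sandwiched (Γ : List (List P)) (r : List P) (x a a' : P) : Prop :=
  x ⋖ a' ∧ fidx Γ (r ++ [a']) < fidx Γ (r ++ [a]) ∧
    ∃ l : ℕ, fidx Γ (r ++ [a]) < l ∧ l < Γ.length ∧ ∀ w ∈ r ++ [a'], w ∈ Γ.getD l []

/-- The label (a position in `Γ`) that the CE-labeling determined by the total order
`Γ` assigns to the rooted cover relation `[x,a]_r`. -/
noncomputable def detLabel (Γ : List (List P)) (r : List P) (x a : P) : ℕ :=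
  if h : ∃ n : ℕ, ∃ a' : P, Sandwiched Γ r x a a' ∧ fidx Γ (r ++ [a']) = n then
    detLabel Γ r x (Nat.find_spec h).choose
  else fidx Γ (r ++ [a])
termination_by fidx Γ (r ++ [a])
decreasing_by exact ((Nat.find_spec h).choose_spec).1.2.1

/-- The CE-labeling of `P` determined by the total order `Γ` on maximal chains. -/
noncomputable def detLabeling (Γ : List (List P)) : List P → P → P → ℤ :=
  fun r x a => (detLabel Γ r x a : ℤ)

/-- `Ω` is a recursive first atom set (RFAS) for `P`. -/
def IsRFAS (Ω : List P → P → P → P) : Prop :=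
  (∀ c : List P, CoverList c → c.length ≤ 2) ∨
    ∀ x y : P, x < y → ∀ r : List P, RootOf r x →
      (x ⋖ Ω r x y ∧ Ω r x y ≤ y) ∧
      ∀ a : P, x ⋖ a → a < y →
        (a = Ω r x y ↔ a = Ω r x (Ω (r ++ [a]) a y)) ∧
        (a ≠ Ω r x y →
          ∃ (p : ℕ) (A B : ℕ → P), 1 ≤ p ∧
            (∀ i, 1 ≤ i → i ≤ p → x ⋖ A i ∧ A i ≤ y) ∧
            A p = Ω r x (Ω (r ++ [a]) a y) ∧ A 1 = Ω r x y ∧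
            ∀ i, 1 ≤ i → i ≤ p - 1 →
              B i = Ω (r ++ [A (i + 1)]) (A (i + 1)) y ∧ A i = Ω r x (B i))

/-- The chain (second argument, a saturated chain from the last element of the root to
`y`) is the first atom chain `c(r, x, y)` of the rooted interval with top `y`:
each step except possibly the last follows the first atoms of `Ω`. -/
def IsFAC (Ω : List P → P → P → P) (y : P) : List P → List P → Prop
  | r, x :: z :: t => (t ≠ [] → z = Ω r x y) ∧ IsFAC Ω y (r ++ [z]) (z :: t)
  | _, _ => True

/-- The chain (second argument) with root `r` contains a pseudo descent with respect
to `Ω`. -/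
def HasPseudoDescent (Ω : List P → P → P → P) : List P → List P → Prop
  | r, u :: v :: w :: t => v ≠ Ω r u w ∨ HasPseudoDescent Ω (r ++ [v]) (v :: w :: t)
  | _, _ => False

/-- `m → m'` : `m` is obtained from the maximal chain `m'` by replacing a pseudo
descent `x ⋖ y ⋖ z` of `m'` with the first atom chain `c(m^x, x, z)`. -/
def StepRel (Ω : List P → P → P → P) (m m' : List P) : Prop :=
  MaxChainOfP m ∧ MaxChainOfP m' ∧
    ∃ (x y z : P) (r d c : List P),
      RootOf r x ∧ x ⋖ y ∧ y ⋖ z ∧ y ≠ Ω r x z ∧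
      m' = r ++ y :: z :: d ∧
      SatFromTo c x z ∧ IsFAC Ω z r c ∧
      m = r ++ c.tail ++ d

/-- `Γ` is a linear extension of the partial order `⪯` (the reflexive-transitive
closure of `→`) on the maximal chains of `P`. -/
def LinExtOf (Ω : List P → P → P → P) (Γ : List (List P)) : Prop :=
  Enumerates Γ ∧ ∀ i j : ℕ, i < Γ.length → j < Γ.length →
    Relation.ReflTransGen (StepRel Ω) (Γ.getD i []) (Γ.getD j []) → i ≤ j

/-- `Γ`, a total order on the facets (maximal chains) of the order complex `Δ(P)`,
is a shelling order: for each `j` the intersection of the `j`-th facet with the union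
of the earlier ones is pure of dimension one less than that of the `j`-th facet. -/
def IsShelling (Γ : List (List P)) : Prop :=
  ∀ j : ℕ, 0 < j → j < Γ.length → ∀ S : Finset P,
    S ⊆ (Γ.getD j []).toFinset → (∃ i < j, S ⊆ (Γ.getD i []).toFinset) →
    ∃ T : Finset P, S ⊆ T ∧ T ⊆ (Γ.getD j []).toFinset ∧
      (∃ i < j, T ⊆ (Γ.getD i []).toFinset) ∧
      T.card + 1 = (Γ.getD j []).toFinset.card

/-- Condition (LC) for a linear extension `Γ` of `⪯`. -/
def LCCondition (Γ : List (List P)) : Prop :=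
  ∀ i j k : ℕ, i < j → j < k → k < Γ.length →
    ∀ (r : List P) (x y y' z : P), RootOf r x → x ⋖ y → y ⋖ z → x ⋖ y' →
      (∀ w ∈ r ++ [y, z], w ∈ Γ.getD i []) →
      (∀ w ∈ r ++ [y, z], w ∈ Γ.getD k []) →
      (∀ w ∈ r ++ [y'], w ∈ Γ.getD j []) → y' = y

/-- `Ω` is a labeling-compatible recursive first atom set (LCRFAS). -/
def IsLCRFAS (Ω : List P → P → P → P) : Prop :=
  IsRFAS Ω ∧ ∃ Γ : List (List P), LinExtOf Ω Γ ∧ LCCondition Γ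

/-- The CE-labeling `lab` is compatible with the RFAS `Ω` : in every rooted interval
the first atom lies on a lexicographically smallest maximal chain. -/
def Compatible (lab : List P → P → P → ℤ) (Ω : List P → P → P → P) : Prop :=
  ∀ x y : P, x < y → ∀ r : List P, RootOf r x →
    ∃ c : List P, SatFromTo c x y ∧ Ω r x y ∈ c ∧
      ∀ c' : List P, SatFromTo c' x y →
        ¬ List.Lex (· < ·) (labelSeq lab r c') (labelSeq lab r c)

set_option linter.unusedSectionVars false

lemma coverList_iff_chain' : ∀ l : List P, CoverList l ↔ List.Chain' (· ⋖ ·) l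
  | [] => by simp [CoverList, List.Chain']
  | [a] => by simp [CoverList, List.Chain']
  | a :: b :: t => by
    rw [CoverList, coverList_iff_chain' (b :: t)]
    exact List.isChain_cons_cons.symm

lemma chain'_lt_of_coverList {l : List P} (h : CoverList l) : List.Chain' (· < ·) l :=
  (List.IsChain.imp (fun _ _ hc => hc.lt)) ((coverList_iff_chain' l).1 h)

lemma pairwise_lt_of_coverList {l : List P} (h : CoverList l) : List.Pairwise (· < ·) l :=
  List.isChain_iff_pairwise.mp (chain'_lt_of_coverList h)

/-- saturated chains with same head, contained in a cover-chain, are prefixes -/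
lemma prefix_of_subset : ∀ (s m : List P), CoverList s → CoverList m →
    s.head? = m.head? → (∀ w ∈ s, w ∈ m) → s ≠ [] → s <+: m
  | [], _, _, _, _, _, hne => absurd rfl hne
  | [a], m, _, _, hh, _, _ => by
    cases m with
    | nil => simp at hh
    | cons c m' => simp_all
  | a :: b :: s', m, hs, hm, hh, hsub, _ => by
    cases m with
    | nil => simp at hh
    | cons c m' =>
      simp only [List.head?_cons, Option.some.injEq] at hh
      subst hh
      have hab : a ⋖ b := hs.1
      have hbm : b ∈ a :: m' := hsub b (by simp)
      have hbm' : b ∈ m' := by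
        rcases List.mem_cons.mp hbm with h | h
        · exact absurd (h ▸ hab.lt) (lt_irrefl a)
        · exact h
      cases m' with
      | nil => simp at hbm'
      | cons c2 m'' =>
        have hac2 : a ⋖ c2 := hm.1
        have hc2b : c2 = b := by
          rcases List.mem_cons.mp hbm' with h | h
          · exact h.symm
          · -- b ∈ m'', so c2 < b by sortedness of c2 :: m''
            have hp := pairwise_lt_of_coverList hm.2
            have : c2 < b := (List.pairwise_cons.mp hp).1 b h
            exact absurd this (hab.2 hac2.lt)
        cases hc2b
        have hsub' : ∀ w ∈ b :: s', w ∈ b :: m'' := by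
          intro w hw
          have hwm : w ∈ a :: b :: m'' := hsub w (List.mem_cons_of_mem a hw)
          have haw : a < w := (List.pairwise_cons.mp (pairwise_lt_of_coverList hs)).1 w hw
          rcases List.mem_cons.mp hwm with h | h
          · exact absurd (h ▸ haw) (lt_irrefl a)
          · exact h
        have := prefix_of_subset (b :: s') (b :: m'') hs.2 hm.2 rfl hsub' (by simp)
        exact (List.prefix_cons_inj a).mpr this

lemma coverList_concat {r : List P} {x u : P} (h : CoverList r) (hl : r.getLast? = some x)
    (hxu : x ⋖ u) : CoverList (r ++ [u]) := by
  rw [coverList_iff_chain'] at h ⊢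
  change List.IsChain _ _
  rw [List.isChain_append]
  refine ⟨h, by simp, ?_⟩
  intro a ha b hb
  simp only [List.head?_cons, Option.mem_def, Option.some.injEq] at hb
  rw [Option.mem_def, hl] at ha
  cases ha; cases hb; exact hxu

lemma satFromTo_concat {r : List P} {x u : P} (h : SatFromTo r ⊥ x) (hxu : x ⋖ u) :
    SatFromTo (r ++ [u]) ⊥ u := by
  obtain ⟨hne, hh, hl, hc⟩ := h
  refine ⟨by simp, ?_, by simp [List.getLast?_concat], coverList_concat hc hl hxu⟩
  cases r with
  | nil => exact absurd rfl hne
  | cons a t => simpa using hh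

lemma coverList_tail : ∀ {l : List P}, CoverList l → CoverList l.tail
  | [], _ => trivial
  | [a], _ => trivial
  | a :: b :: t, h => h.2

/-- glue a saturated chain from ⊥ to v with one from v to ⊤ -/
lemma satFromTo_glue {s c : List P} {v : P} (hs : SatFromTo s ⊥ v) (hc : SatFromTo c v ⊤) :
    SatFromTo (s ++ c.tail) ⊥ ⊤ := by
  obtain ⟨hne, hh, hl, hcov⟩ := hs
  obtain ⟨hne', hh', hl', hcov'⟩ := hc
  obtain ⟨c', rfl⟩ : ∃ c', c = v :: c' := by
    cases c with
    | nil => exact absurd rfl hne'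
    | cons a t => exact ⟨t, by simpa using (by simpa using hh' : a = v) ▸ rfl⟩
  refine ⟨by simp [hne], ?_, ?_, ?_⟩
  · cases s with
    | nil => exact absurd rfl hne
    | cons a t => simpa using hh
  · cases c' with
    | nil => simp only [List.tail_cons, List.append_nil, hl]; simpa using hl'
    | cons b t =>
      simp only [List.tail_cons]
      rw [List.getLast?_append_cons]
      simpa using hl'
  · rw [coverList_iff_chain']
    change List.IsChain _ _
    rw [List.isChain_append]
    refine ⟨(coverList_iff_chain' _).1 hcov, (coverList_iff_chain' _).1 (coverList_tail hcov'), ?_⟩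
    intro a ha b hb
    rw [Option.mem_def, hl] at ha
    cases ha
    cases c' with
    | nil => simp at hb
    | cons b' t =>
      simp only [List.tail_cons, List.head?_cons, Option.mem_def, Option.some.injEq] at hb
      cases hb
      exact List.IsChain.rel ((coverList_iff_chain' _).1 hcov')

/-- existence of a saturated chain from any element to ⊤ -/
lemma exists_sat_to_top [Fintype P] : ∀ v : P, ∃ c : List P, SatFromTo c v ⊤ := by
  intro v
  induction v using WellFoundedGT.induction with
  | _ v ih =>
    by_cases hv : v = ⊤
    · exact ⟨[⊤], by simp [SatFromTo, CoverList, hv]⟩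
    · have hvt : v < ⊤ := lt_of_le_of_ne le_top hv
      obtain ⟨w, hw, hmin⟩ := Finset.exists_minimal (⟨⊤, by simpa⟩ : (Finset.univ.filter (v < ·)).Nonempty)
      simp only [Finset.mem_filter, Finset.mem_univ, true_and] at hw
      have hcov : v ⋖ w := ⟨hw, fun z hz hzw => hzw.not_ge (hmin (by simpa using hz) hzw.le)⟩
      obtain ⟨c, hc⟩ := ih w hw
      obtain ⟨hne, hh, hl, hcv⟩ := hc
      obtain ⟨c', rfl⟩ : ∃ c', c = w :: c' := by
        cases c with
        | nil => exact absurd rfl hne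
        | cons a t => exact ⟨t, by simpa using (by simpa using hh : a = w) ▸ rfl⟩
      refine ⟨v :: w :: c', by simp, by simp, ?_, ⟨hcov, hcv⟩⟩
      rw [show v :: w :: c' = [v] ++ (w :: c') from rfl, List.getLast?_append_cons]
      exact hl

lemma labelSeq_append {Λ : Type*} (lab : List P → P → P → Λ) :
    ∀ (r : List P) (ρ : List P) (x : P) (t : List P), r.getLast? = some x →
    labelSeq lab ρ (r ++ t) = labelSeq lab ρ r ++ labelSeq lab (ρ ++ r.tail) (x :: t)
  | [], _, _, _, h => by simp at h
  | [a], ρ, x, t, h => by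
    simp only [List.getLast?_singleton, Option.some.injEq] at h
    subst h
    simp [labelSeq]
  | a :: b :: r', ρ, x, t, h => by
    have h' : (b :: r').getLast? = some x := by
      rw [show a :: b :: r' = [a] ++ (b :: r') from rfl, List.getLast?_append_cons] at h
      exact h
    have IH := labelSeq_append lab (b :: r') (ρ ++ [b]) x t h'
    show lab ρ a b :: labelSeq lab (ρ ++ [b]) ((b :: r') ++ t)
        = (lab ρ a b :: labelSeq lab (ρ ++ [b]) (b :: r')) ++ labelSeq lab (ρ ++ (b :: r')) (x :: t)
    rw [IH, List.cons_append, List.append_assoc]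
    rfl

lemma lex_append_left {Λ : Type*} (R : Λ → Λ → Prop) :
    ∀ (s : List Λ) {l₁ l₂ : List Λ}, List.Lex R l₁ l₂ → List.Lex R (s ++ l₁) (s ++ l₂)
  | [], _, _, h => h
  | a :: s, _, _, h => List.Lex.cons (lex_append_left R s h)

lemma lex_irrefl' {Λ : Type*} [LinearOrder Λ] : ∀ (l : List Λ), ¬ List.Lex (· < ·) l l := by
  intro l h
  induction l with
  | nil => cases h
  | cons a t ih =>
    cases h with
    | cons h => exact ih h
    | rel h => exact lt_irrefl _ h

section Core
variable [Fintype P] {lab : List P → P → P → ℤ} {Γ : List (List P)}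

/-- if the i-th chain lex-precedes the j-th, then i < j -/
lemma lt_of_lex (hΓ : AgreesWithLex lab Γ) {i j : ℕ} (hi : i < Γ.length) (hj : j < Γ.length)
    (h : List.Lex (· < ·) (labelSeq lab [(⊥ : P)] (Γ.getD i []))
      (labelSeq lab [(⊥ : P)] (Γ.getD j []))) : i < j := by
  rcases lt_trichotomy i j with h' | h' | h'
  · exact h'
  · subst h'; exact absurd h (lex_irrefl' _)
  · exact absurd h (hΓ.2 j i h' hi)

lemma root_cons {r : List P} {x : P} (hr : RootOf r x) : r = ⊥ :: r.tail := by
  obtain ⟨hne, hh, -, -⟩ := hr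
  cases r with
  | nil => exact absurd rfl hne
  | cons a t => simpa using (by simpa using hh : a = (⊥ : P)) ▸ rfl

lemma seq_root_decomp {r : List P} {x : P} (hr : RootOf r x) (t : List P) :
    labelSeq lab [(⊥ : P)] (r ++ t) =
      labelSeq lab [(⊥ : P)] r ++ labelSeq lab r (x :: t) := by
  have := labelSeq_append lab r [(⊥ : P)] x t hr.2.2.1
  rwa [show ([(⊥ : P)] ++ r.tail) = r by rw [root_cons hr]; rfl] at this

/-- the chain found by fidx exists and has the given saturated chain as prefix -/
lemma fidx_spec (hΓ : AgreesWithLex lab Γ) {s : List P} {v : P} (hs : SatFromTo s ⊥ v) :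
    fidx Γ s < Γ.length ∧ ∃ t : List P, Γ.getD (fidx Γ s) [] = s ++ t := by
  obtain ⟨c, hc⟩ := exists_sat_to_top v
  have hmax : MaxChainOfP (s ++ c.tail) := satFromTo_glue hs hc
  have hmem : (s ++ c.tail) ∈ Γ := (hΓ.1.2 _).2 hmax
  have hlt : fidx Γ s < Γ.length := by
    unfold fidx
    exact List.findIdx_lt_length_of_exists
      ⟨s ++ c.tail, hmem, by
        simp only [decide_eq_true_eq]
        exact fun a ha => List.mem_append_left _ ha⟩
  refine ⟨hlt, ?_⟩
  have hsub : ∀ a ∈ s, a ∈ Γ[fidx Γ s] := by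
    have h := List.findIdx_getElem (w := hlt)
    simp only [decide_eq_true_eq] at h
    convert h using 4
    unfold fidx
    congr!
  have hmax' : MaxChainOfP (Γ[fidx Γ s]) := (hΓ.1.2 _).1 (Γ.getElem_mem _)
  have hpre : s <+: Γ[fidx Γ s] := by
    refine prefix_of_subset _ _ hs.2.2.2 hmax'.2.2.2 ?_ hsub hs.1
    rw [hs.2.1, hmax'.2.1]
  obtain ⟨t, ht⟩ := hpre
  exact ⟨t, by rw [List.getD_eq_getElem _ _ hlt, ← ht]⟩

/-- the chain at a position containing s has s as prefix -/
lemma prefix_of_mem_getD (hΓ : AgreesWithLex lab Γ) {s : List P} {v : P} (hs : SatFromTo s ⊥ v)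
    {l : ℕ} (hl : l < Γ.length) (hsub : ∀ a ∈ s, a ∈ Γ.getD l []) :
    ∃ t : List P, Γ.getD l [] = s ++ t := by
  have hmax' : MaxChainOfP (Γ.getD l []) := by
    rw [List.getD_eq_getElem _ _ hl]
    exact (hΓ.1.2 _).1 (Γ.getElem_mem _)
  have hpre : s <+: Γ.getD l [] := by
    refine prefix_of_subset _ _ hs.2.2.2 hmax'.2.2.2 ?_ hsub hs.1
    rw [hs.2.1, hmax'.2.1]
  obtain ⟨t, ht⟩ := hpre
  exact ⟨t, ht.symm⟩

end Core

section Core2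
variable [Fintype P] {lab : List P → P → P → ℤ} {Γ : List (List P)}

lemma seq_atom_decomp {ρ : List P} {v : P} (hρ : RootOf ρ v) (a : P) (t : List P) :
    labelSeq lab [(⊥ : P)] ((ρ ++ [a]) ++ t) =
      labelSeq lab [(⊥ : P)] ρ ++ (lab ρ v a :: labelSeq lab (ρ ++ [a]) (a :: t)) := by
  rw [List.append_assoc, List.singleton_append, seq_root_decomp hρ]
  rfl

lemma seq_atom2_decomp {ρ : List P} {v : P} (hρ : RootOf ρ v) (a b : P) (t : List P) :
    labelSeq lab [(⊥ : P)] (((ρ ++ [a]) ++ [b]) ++ t) =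
      labelSeq lab [(⊥ : P)] ρ ++
        (lab ρ v a :: lab (ρ ++ [a]) a b :: labelSeq lab ((ρ ++ [a]) ++ [b]) (b :: t)) := by
  have he : ((ρ ++ [a]) ++ [b]) ++ t = ρ ++ (a :: b :: t) := by simp
  rw [he, seq_root_decomp hρ]
  rfl

lemma fidx_lt_of_lex (hΓ : AgreesWithLex lab Γ) {s s' : List P} {v v' : P}
    (hs : SatFromTo s ⊥ v) (hs' : SatFromTo s' ⊥ v')
    (hlex : ∀ t t' : List P, List.Lex (· < ·)
      (labelSeq lab [(⊥ : P)] (s ++ t)) (labelSeq lab [(⊥ : P)] (s' ++ t'))) :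
    fidx Γ s < fidx Γ s' := by
  obtain ⟨hi, t, hti⟩ := fidx_spec hΓ hs
  obtain ⟨hj, t', htj⟩ := fidx_spec hΓ hs'
  apply lt_of_lex hΓ hi hj
  rw [hti, htj]
  exact hlex t t'

lemma sandwich_label_eq (hΓ : AgreesWithLex lab Γ) {ρ : List P} {v : P} (hρ : RootOf ρ v)
    {a a' : P} (ha : v ⋖ a) (hsw : Sandwiched Γ ρ v a a') : lab ρ v a' = lab ρ v a := by
  obtain ⟨ha', hlt, l, hl1, hl2, hsubl⟩ := hsw
  have hsa : SatFromTo (ρ ++ [a]) ⊥ a := satFromTo_concat hρ ha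
  have hsa' : SatFromTo (ρ ++ [a']) ⊥ a' := satFromTo_concat hρ ha'
  obtain ⟨hia', ta', hta'⟩ := fidx_spec hΓ hsa'
  obtain ⟨hia, ta, hta⟩ := fidx_spec hΓ hsa
  obtain ⟨tl, htl⟩ := prefix_of_mem_getD hΓ hsa' hl2 hsubl
  by_contra hne
  rcases lt_or_gt_of_ne hne with h | h
  · -- lab ρ v a' < lab ρ v a : Γ_l lex-precedes Γ_{fidx(ρ++[a])}, but comes after it
    have hlex : List.Lex (· < ·) (labelSeq lab [(⊥ : P)] (Γ.getD l []))
        (labelSeq lab [(⊥ : P)] (Γ.getD (fidx Γ (ρ ++ [a])) [])) := by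
      rw [htl, hta, seq_atom_decomp hρ, seq_atom_decomp hρ]
      exact lex_append_left _ _ (List.Lex.rel h)
    have := lt_of_lex hΓ hl2 hia hlex
    omega
  · -- lab ρ v a < lab ρ v a' : Γ_{fidx(ρ++[a])} lex-precedes Γ_{fidx(ρ++[a'])}
    have hlex : List.Lex (· < ·) (labelSeq lab [(⊥ : P)] (Γ.getD (fidx Γ (ρ ++ [a])) []))
        (labelSeq lab [(⊥ : P)] (Γ.getD (fidx Γ (ρ ++ [a'])) [])) := by
      rw [hta, hta', seq_atom_decomp hρ, seq_atom_decomp hρ]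
      exact lex_append_left _ _ (List.Lex.rel h)
    have := lt_of_lex hΓ hia hia' hlex
    omega

lemma detLabel_eq_fidx (hΓ : AgreesWithLex lab Γ) {ρ : List P} {v : P} (hρ : RootOf ρ v) :
    ∀ n a, v ⋖ a → fidx Γ (ρ ++ [a]) = n →
    ∃ a', v ⋖ a' ∧ lab ρ v a' = lab ρ v a ∧ detLabel Γ ρ v a = fidx Γ (ρ ++ [a']) := by
  intro n
  induction n using Nat.strong_induction_on with
  | _ n IH =>
    intro a ha hfa
    rw [detLabel]
    split_ifs with h
    · have hspec := (Nat.find_spec h).choose_spec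
      have hsw : Sandwiched Γ ρ v a (Nat.find_spec h).choose := hspec.1
      have hlabw : lab ρ v (Nat.find_spec h).choose = lab ρ v a :=
        sandwich_label_eq hΓ hρ ha hsw
      have hwlt : fidx Γ (ρ ++ [(Nat.find_spec h).choose]) < n := hfa ▸ hsw.2.1
      obtain ⟨a', h1, h2, h3⟩ := IH _ hwlt _ hsw.1 rfl
      refine ⟨a', h1, h2.trans hlabw, ?_⟩
      convert h3 using 3
      congr!
    · exact ⟨a, ha, rfl, rfl⟩

end Core2


/-- Proposition 4.8: comparisons of labels of a TCL-labeling `lab` are preserved by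
the CE-labeling determined by a total order `Γ` agreeing with the lexicographic order
induced by `lab`. -/
theorem stmt6 {P : Type*} [PartialOrder P] [BoundedOrder P] [Fintype P]
    (lab : List P → P → P → ℤ) (hTCL : IsTCLLabeling lab)
    (Γ : List (List P)) (hΓ : AgreesWithLex lab Γ)
    (x u b y d : P) (r : List P) (hr : RootOf r x)
    (hxu : x ⋖ u) (hub : u ⋖ b) (hxy : x ⋖ y) (hyd : y ⋖ d) (hne : u ≠ y) :
    (lab r x u < lab r x y → detLabeling Γ r x u < detLabeling Γ r x y) ∧
    (lab r x u = lab r x y → lab (r ++ [u]) u b < lab (r ++ [y]) y d →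
      detLabeling Γ (r ++ [u]) u b < detLabeling Γ (r ++ [y]) y d) := by
  constructor
  · intro hlt
    obtain ⟨u', hu1, hu2, hu3⟩ := detLabel_eq_fidx hΓ hr _ u hxu rfl
    obtain ⟨y', hy1, hy2, hy3⟩ := detLabel_eq_fidx hΓ hr _ y hxy rfl
    have key : fidx Γ (r ++ [u']) < fidx Γ (r ++ [y']) := by
      apply fidx_lt_of_lex hΓ (satFromTo_concat hr hu1) (satFromTo_concat hr hy1)
      intro t t'
      rw [seq_atom_decomp hr, seq_atom_decomp hr]
      exact lex_append_left _ _ (List.Lex.rel (by rw [hu2, hy2]; exact hlt))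
    show ((detLabel Γ r x u : ℤ)) < ((detLabel Γ r x y : ℤ))
    rw [hu3, hy3]
    exact_mod_cast key
  · intro heq hlt
    have hru : RootOf (r ++ [u]) u := satFromTo_concat hr hxu
    have hry : RootOf (r ++ [y]) y := satFromTo_concat hr hxy
    obtain ⟨b', hb1, hb2, hb3⟩ := detLabel_eq_fidx hΓ hru _ b hub rfl
    obtain ⟨d', hd1, hd2, hd3⟩ := detLabel_eq_fidx hΓ hry _ d hyd rfl
    have key : fidx Γ ((r ++ [u]) ++ [b']) < fidx Γ ((r ++ [y]) ++ [d']) := by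
      apply fidx_lt_of_lex hΓ (satFromTo_concat hru hb1) (satFromTo_concat hry hd1)
      intro t t'
      rw [seq_atom2_decomp hr, seq_atom2_decomp hr]
      apply lex_append_left
      rw [heq]
      exact List.Lex.cons (List.Lex.rel (by rw [hb2, hd2]; exact hlt))
    show ((detLabel Γ (r ++ [u]) u b : ℤ)) < ((detLabel Γ (r ++ [y]) y d : ℤ))
    rw [hb3, hd3]
    exact_mod_cast key
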